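/- (Litmus test 6: a value observed by a second machine is not lost when the writer crashes) Assume machines 1, 2 and 3 are pairwise distinct, x ∈ Loc_3, and 1 is a value in Val with 1 ≠ 0. Then there is no configuration γ' such that γ_0 ⇒^{LStore_1(x,1)·Load_2(x,1)·Crash_1·Load_2(x,0)} γ', i.e., no execution from the initial configuration performs LStore_1(x,1), then Load_2(x,1), then Crash_1, then Load_2(x,0), possibly interleaved with silent τ-steps. -/

import Mathlib

/-!  The CXL0 model.

We fix an abstract type `Machine` of machines, a type `Loc` of shared
locations, and a type `Val` of values with a distinguished value `z`
(playing the role of the value `0`).  The partition of `Loc` into the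
pairwise disjoint sets `Loc_1, …, Loc_N` is encoded by an ownership map
`owner : Loc → Machine` (so `x ∈ Loc_k` iff `owner x = k`).  Volatility of
each machine's memory is given by `vol : Machine → Bool` (`vol i = true`
means machine `i`'s memory is volatile).

A configuration `γ = (Cache, Mem)` is modeled by total maps
`cache : Machine → Loc → Option Val` (with `none` playing the role of `⊥`)
and `mem : Machine → Loc → Val` (the entries of `mem i` at locations not
owned by `i` are irrelevant; the transitions never consult them). -/

/-- Transition labels of the CXL0 labeled transition system. -/
inductive CXLLabel (Machine Loc Val : Type) : Type where
  | LStore (i : Machine) (x : Loc) (v : Val)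
  | RStore (i : Machine) (x : Loc) (v : Val)
  | MStore (i : Machine) (x : Loc) (v : Val)
  | Load   (i : Machine) (x : Loc) (v : Val)
  | LFlush (i : Machine) (x : Loc)
  | RFlush (i : Machine) (x : Loc)
  | GPF    (i : Machine)
  | Crash  (i : Machine)
  | tau

/-- Configurations of the CXL0 model. -/
structure CXLConfig (Machine Loc Val : Type) : Type where
  cache : Machine → Loc → Option Val
  mem   : Machine → Loc → Val

variable {Machine Loc Val : Type} [DecidableEq Machine] [DecidableEq Loc]

/-- Single labeled transition of the CXL0 model. -/
inductive CXLStep (owner : Loc → Machine) (vol : Machine → Bool) (z : Val) :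
    CXLConfig Machine Loc Val → CXLLabel Machine Loc Val →
      CXLConfig Machine Loc Val → Prop where
  | lstore (γ : CXLConfig Machine Loc Val) (i : Machine) (x : Loc) (v : Val) :
      CXLStep owner vol z γ (.LStore i x v)
        ⟨fun j y => if y = x then (if j = i then some v else none) else γ.cache j y,
         γ.mem⟩
  | rstore (γ : CXLConfig Machine Loc Val) (i : Machine) (x : Loc) (v : Val) :
      CXLStep owner vol z γ (.RStore i x v)
        ⟨fun j y => if y = x then (if j = owner x then some v else none) else γ.cache j y,
         γ.mem⟩
  | mstore (γ : CXLConfig Machine Loc Val) (i : Machine) (x : Loc) (v : Val) :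
      CXLStep owner vol z γ (.MStore i x v)
        ⟨fun j y => if y = x then none else γ.cache j y,
         fun j y => if j = owner x ∧ y = x then v else γ.mem j y⟩
  | load_cache (γ : CXLConfig Machine Loc Val) (i j : Machine) (x : Loc) (v : Val)
      (h : γ.cache j x = some v) :
      CXLStep owner vol z γ (.Load i x v)
        ⟨fun j' y => if j' = i ∧ y = x then some v else γ.cache j' y, γ.mem⟩
  | load_mem (γ : CXLConfig Machine Loc Val) (i : Machine) (x : Loc) (v : Val)
      (h : ∀ j, γ.cache j x = none) (hm : γ.mem (owner x) x = v) :
      CXLStep owner vol z γ (.Load i x v) γ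
  | lflush (γ : CXLConfig Machine Loc Val) (i : Machine) (x : Loc)
      (h : γ.cache i x = none) :
      CXLStep owner vol z γ (.LFlush i x) γ
  | rflush (γ : CXLConfig Machine Loc Val) (i : Machine) (x : Loc)
      (h : ∀ j, γ.cache j x = none) :
      CXLStep owner vol z γ (.RFlush i x) γ
  | gpf (γ : CXLConfig Machine Loc Val) (i : Machine)
      (h : ∀ j y, γ.cache j y = none) :
      CXLStep owner vol z γ (.GPF i) γ
  | prop_cache_cache (γ : CXLConfig Machine Loc Val) (i : Machine) (x : Loc) (v : Val)
      (hik : i ≠ owner x) (h : γ.cache i x = some v) :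
      CXLStep owner vol z γ .tau
        ⟨fun j y => if y = x then
            (if j = owner x then some v else if j = i then none else γ.cache j y)
          else γ.cache j y,
         γ.mem⟩
  | prop_cache_mem (γ : CXLConfig Machine Loc Val) (x : Loc) (v : Val)
      (h : γ.cache (owner x) x = some v) :
      CXLStep owner vol z γ .tau
        ⟨fun j y => if y = x then none else γ.cache j y,
         fun j y => if j = owner x ∧ y = x then v else γ.mem j y⟩
  | crash (γ : CXLConfig Machine Loc Val) (i : Machine) :
      CXLStep owner vol z γ (.Crash i)
        ⟨fun j y => if j = i then none else γ.cache j y,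
         fun j y => if j = i ∧ vol i then z else γ.mem j y⟩

/-- `CXLTrace owner vol z γ ls γ'` : `γ'` is reachable from `γ` by a sequence of
transitions labeled by the elements of `ls`, in this order, possibly interleaved
with additional silent `τ`-steps (this is the `γ ⇒^{α_1⋯α_n} γ'` relation). -/
inductive CXLTrace (owner : Loc → Machine) (vol : Machine → Bool) (z : Val) :
    CXLConfig Machine Loc Val → List (CXLLabel Machine Loc Val) →
      CXLConfig Machine Loc Val → Prop where
  | nil (γ : CXLConfig Machine Loc Val) : CXLTrace owner vol z γ [] γ
  | tau {γ γ' γ'' : CXLConfig Machine Loc Val} {ls : List (CXLLabel Machine Loc Val)}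
      (h : CXLStep owner vol z γ .tau γ') (ht : CXLTrace owner vol z γ' ls γ'') :
      CXLTrace owner vol z γ ls γ''
  | cons {γ γ' γ'' : CXLConfig Machine Loc Val} {l : CXLLabel Machine Loc Val}
      {ls : List (CXLLabel Machine Loc Val)}
      (h : CXLStep owner vol z γ l γ') (ht : CXLTrace owner vol z γ' ls γ'') :
      CXLTrace owner vol z γ (l :: ls) γ''

/-- Reachability by a (possibly empty) finite sequence of silent `τ`-steps. -/
def CXLTauSteps (owner : Loc → Machine) (vol : Machine → Bool) (z : Val) :
    CXLConfig Machine Loc Val → CXLConfig Machine Loc Val → Prop :=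
  Relation.ReflTransGen (fun a b => CXLStep owner vol z a .tau b)

/-- The initial configuration `γ_0`: all caches empty, all memories `0`. -/
def CXLInit (Machine Loc : Type) (z : Val) : CXLConfig Machine Loc Val :=
  ⟨fun _ _ => none, fun _ _ => z⟩

private lemma trace_cons_inv {owner : Loc → Machine} {vol : Machine → Bool} {z : Val}
    {γ γ' : CXLConfig Machine Loc Val} {l : CXLLabel Machine Loc Val}
    {ls : List (CXLLabel Machine Loc Val)}
    (h : CXLTrace owner vol z γ (l :: ls) γ') :
    ∃ γ1 γ2, CXLTauSteps owner vol z γ γ1 ∧ CXLStep owner vol z γ1 l γ2 ∧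
      CXLTrace owner vol z γ2 ls γ' := by
  generalize hL : l :: ls = L at h
  induction h with
  | nil _ => exact absurd hL (by simp)
  | tau hs ht ih =>
      obtain ⟨a, b, h1, h2, h3⟩ := ih hL
      exact ⟨a, b, Relation.ReflTransGen.head hs h1, h2, h3⟩
  | cons hs ht ih =>
      injection hL with e1 e2
      subst e1; subst e2
      exact ⟨_, _, Relation.ReflTransGen.refl, hs, ht⟩

private lemma tau_pres {owner : Loc → Machine} {vol : Machine → Bool} {z : Val}
    {x : Loc} {one : Val} (pr : Machine → Prop) (hpr : pr (owner x))
    {γ γ' : CXLConfig Machine Loc Val}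
    (h : CXLStep owner vol z γ .tau γ')
    (hc : ∀ j, γ.cache j x = none ∨ γ.cache j x = some one)
    (hw : γ.mem (owner x) x = one ∨ ∃ j, pr j ∧ γ.cache j x = some one) :
    (∀ j, γ'.cache j x = none ∨ γ'.cache j x = some one) ∧
      (γ'.mem (owner x) x = one ∨ ∃ j, pr j ∧ γ'.cache j x = some one) := by
  cases h with
  | prop_cache_cache i x' v hik hcv =>
      by_cases hxx : x = x'
      · subst hxx
        have hv : v = one := by
          rcases hc i with h' | h' <;> rw [hcv] at h' <;> simp_all
        subst hv
        refine ⟨?_, Or.inr ⟨owner x, hpr, by simp⟩⟩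
        intro j; dsimp only; rw [if_pos rfl]
        by_cases h1 : j = owner x
        · simp [h1]
        · rw [if_neg h1]
          by_cases h2 : j = i
          · simp [h2]
          · rw [if_neg h2]; exact hc j
      · refine ⟨fun j => ?_, ?_⟩
        · dsimp only; rw [if_neg hxx]; exact hc j
        · rcases hw with h' | ⟨j, hj, h'⟩
          · exact Or.inl h'
          · exact Or.inr ⟨j, hj, by dsimp only; rw [if_neg hxx]; exact h'⟩
  | prop_cache_mem x' v hcv =>
      by_cases hxx : x = x'
      · subst hxx
        have hv : v = one := by
          rcases hc (owner x) with h' | h' <;> rw [hcv] at h' <;> simp_all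
        subst hv
        exact ⟨fun j => Or.inl (by simp), Or.inl (by simp)⟩
      · refine ⟨fun j => ?_, ?_⟩
        · dsimp only; rw [if_neg hxx]; exact hc j
        · rcases hw with h' | ⟨j, hj, h'⟩
          · refine Or.inl ?_
            dsimp only
            rw [if_neg (by rintro ⟨-, e⟩; exact hxx e)]
            exact h'
          · exact Or.inr ⟨j, hj, by dsimp only; rw [if_neg hxx]; exact h'⟩

private lemma taus_pres {owner : Loc → Machine} {vol : Machine → Bool} {z : Val}
    {x : Loc} {one : Val} (pr : Machine → Prop) (hpr : pr (owner x))
    {γ γ' : CXLConfig Machine Loc Val}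
    (h : CXLTauSteps owner vol z γ γ')
    (hc : ∀ j, γ.cache j x = none ∨ γ.cache j x = some one)
    (hw : γ.mem (owner x) x = one ∨ ∃ j, pr j ∧ γ.cache j x = some one) :
    (∀ j, γ'.cache j x = none ∨ γ'.cache j x = some one) ∧
      (γ'.mem (owner x) x = one ∨ ∃ j, pr j ∧ γ'.cache j x = some one) := by
  induction h with
  | refl => exact ⟨hc, hw⟩
  | tail _ hs ih => exact tau_pres pr hpr hs ih.1 ih.2

/-- Litmus test 6: a value observed by a second machine is not lost when the
writer crashes. -/
theorem litmus_observed_value_not_lost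
    (owner : Loc → Machine) (vol : Machine → Bool) (z : Val)
    (m1 m2 m3 : Machine) (h12 : m1 ≠ m2) (h13 : m1 ≠ m3) (h23 : m2 ≠ m3)
    (x : Loc) (hx : owner x = m3) (one : Val) (hone : one ≠ z) :
    ¬ ∃ γ' : CXLConfig Machine Loc Val,
      CXLTrace owner vol z (CXLInit Machine Loc z)
        [.LStore m1 x one, .Load m2 x one, .Crash m1, .Load m2 x z] γ' := by
  rintro ⟨γF, htr⟩
  obtain ⟨a1, b1, hT1, hS1, htr⟩ := trace_cons_inv htr
  obtain ⟨a2, b2, hT2, hS2, htr⟩ := trace_cons_inv htr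
  obtain ⟨a3, b3, hT3, hS3, htr⟩ := trace_cons_inv htr
  obtain ⟨a4, b4, hT4, hS4, -⟩ := trace_cons_inv htr
  have hxm1 : owner x ≠ m1 := by rw [hx]; exact Ne.symm h13
  -- After the LStore, invariant P (with trivial predicate) holds.
  have hP1 : (∀ j, b1.cache j x = none ∨ b1.cache j x = some one) ∧
      (b1.mem (owner x) x = one ∨ ∃ j, (fun _ : Machine => True) j ∧
        b1.cache j x = some one) := by
    cases hS1 with
    | lstore i x v =>
        refine ⟨fun j => ?_, Or.inr ⟨m1, trivial, by simp⟩⟩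
        dsimp only; rw [if_pos rfl]
        by_cases h1 : j = m1
        · exact Or.inr (by rw [if_pos h1])
        · exact Or.inl (by rw [if_neg h1])
  have hP2 := taus_pres (fun _ => True) trivial hT2 hP1.1 hP1.2
  -- After the Load by machine 2, invariant Q holds (witness outside m1).
  have hQ2 : (∀ j, b2.cache j x = none ∨ b2.cache j x = some one) ∧
      (b2.mem (owner x) x = one ∨ ∃ j, j ≠ m1 ∧ b2.cache j x = some one) := by
    cases hS2 with
    | load_cache i j x v hjv =>
        refine ⟨fun k => ?_, Or.inr ⟨m2, Ne.symm h12, by simp⟩⟩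
        dsimp only
        by_cases h1 : k = m2 ∧ x = x
        · exact Or.inr (by rw [if_pos h1])
        · rw [if_neg h1]; exact hP2.1 k
    | load_mem i x v hall hm => exact ⟨hP2.1, Or.inl hm⟩
  have hQ3 := taus_pres (fun j => j ≠ m1) hxm1 hT3 hQ2.1 hQ2.2
  -- The crash of machine 1 preserves Q.
  have hQ3' : (∀ j, b3.cache j x = none ∨ b3.cache j x = some one) ∧
      (b3.mem (owner x) x = one ∨ ∃ j, j ≠ m1 ∧ b3.cache j x = some one) := by
    cases hS3 with
    | crash i =>
        refine ⟨fun j => ?_, ?_⟩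
        · dsimp only
          by_cases h1 : j = m1
          · exact Or.inl (by rw [if_pos h1])
          · rw [if_neg h1]; exact hQ3.1 j
        · rcases hQ3.2 with h' | ⟨j, hj, h'⟩
          · refine Or.inl ?_
            dsimp only
            rw [if_neg (by rintro ⟨e, -⟩; exact hxm1 e)]
            exact h'
          · exact Or.inr ⟨j, hj, by dsimp only; rw [if_neg hj]; exact h'⟩
  have hQ4 := taus_pres (fun j => j ≠ m1) hxm1 hT4 hQ3'.1 hQ3'.2
  -- The final Load of `z` is impossible.
  cases hS4 with
  | load_cache i j x v hjv =>
      rcases hQ4.1 j with h' | h' <;> rw [hjv] at h' <;> simp_all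
  | load_mem i x v hall hm =>
      rcases hQ4.2 with h' | ⟨j, hj, h'⟩
      · rw [hm] at h'; exact hone h'.symm
      · rw [hall j] at h'; exact nomatch h'
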